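/- Let X, Y be Banach spaces, A : X → Y a bounded linear map with a bounded linear right inverse Q : Y → X (i.e. A∘Q = id_Y), and let N : X → Y satisfy N(0) = 0 and ‖Q(N(u)) − Q(N(v))‖ ≤ G(‖u‖ + ‖v‖)‖u − v‖ for some constant G > 0 and all u, v in the closed ball of radius 1/(4G). Let y₀ ∈ Y with ‖Q(y₀)‖ ≤ 1/(8G) and define f(x) := y₀ + A x + N(x). Then there exists x ∈ X with ‖x‖ ≤ 2‖Q(y₀)‖ and f(x) = 0; moreover x can be taken of the form x = Q(z) for some z ∈ Y, and such an x is unique among points of the image of Q in the ball of radius 2‖Q(y₀)‖. -/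

import Mathlib

/-- Floer's Picard lemma (existence and uniqueness part). -/
theorem stmt_16 {X Y : Type*}
    [NormedAddCommGroup X] [NormedSpace ℝ X] [CompleteSpace X]
    [NormedAddCommGroup Y] [NormedSpace ℝ Y]
    (A : X →L[ℝ] Y) (Q : Y →L[ℝ] X)
    (hAQ : ∀ y : Y, A (Q y) = y)
    (N : X → Y) (hN0 : N 0 = 0)
    (G : ℝ) (hG : 0 < G)
    (hquad : ∀ u v : X, ‖u‖ ≤ 1 / (4 * G) → ‖v‖ ≤ 1 / (4 * G) →
      ‖Q (N u) - Q (N v)‖ ≤ G * (‖u‖ + ‖v‖) * ‖u - v‖)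
    (y₀ : Y) (hy₀ : ‖Q y₀‖ ≤ 1 / (8 * G)) :
    ∃ x : X, ‖x‖ ≤ 2 * ‖Q y₀‖ ∧ y₀ + A x + N x = 0 ∧ (∃ z : Y, x = Q z) ∧
      ∀ x' : X, (∃ z' : Y, x' = Q z') → ‖x'‖ ≤ 2 * ‖Q y₀‖ →
        y₀ + A x' + N x' = 0 → x' = x := by
  set r := 2 * ‖Q y₀‖ with hr
  have hr0 : 0 ≤ r := by positivity
  have hrle : r ≤ 1 / (4 * G) := by
    have h2 : 2 * (1 / (8 * G)) = 1 / (4 * G) := by field_simp; ring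
    rw [hr]; linarith
  have hGr : G * r ≤ 1 / 4 := by
    have h1 : G * r ≤ G * (1 / (4 * G)) := mul_le_mul_of_nonneg_left hrle hG.le
    have h2 : G * (1 / (4 * G)) = 1 / 4 := by field_simp
    linarith
  set T : X → X := fun x => -(Q y₀) - Q (N x) with hT
  -- T maps the closed ball into itself
  have hmaps : ∀ x ∈ Metric.closedBall (0 : X) r, T x ∈ Metric.closedBall (0 : X) r := by
    intro x hx
    rw [mem_closedBall_zero_iff] at hx ⊢
    have h1 := hquad x 0 (hx.trans hrle)
      (by simpa using le_of_lt (by positivity : (0:ℝ) < 1 / (4 * G)))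
    rw [hN0, map_zero, sub_zero, norm_zero, add_zero, sub_zero] at h1
    have h2 : ‖T x‖ ≤ ‖Q y₀‖ + ‖Q (N x)‖ := by
      calc ‖T x‖ = ‖-(Q y₀) - Q (N x)‖ := rfl
        _ ≤ ‖-(Q y₀)‖ + ‖Q (N x)‖ := norm_sub_le _ _
        _ = ‖Q y₀‖ + ‖Q (N x)‖ := by rw [norm_neg]
    have hxn : 0 ≤ ‖x‖ := norm_nonneg x
    have k1 : G * ‖x‖ ≤ 1 / 4 :=
      le_trans (by nlinarith : G * ‖x‖ ≤ G * r) hGr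
    have k2 : G * ‖x‖ * ‖x‖ ≤ (1 / 4) * ‖x‖ := by nlinarith
    have k3 : (1 / 4) * ‖x‖ ≤ (1 / 4) * r := by linarith
    linarith [hr]
  -- contraction estimate
  have hcontr : ∀ u v : X, ‖u‖ ≤ r → ‖v‖ ≤ r → ‖T u - T v‖ ≤ (1/2) * ‖u - v‖ := by
    intro u v hu hv
    have h1 := hquad u v (hu.trans hrle) (hv.trans hrle)
    have h2 : T u - T v = -(Q (N u) - Q (N v)) := by
      simp only [hT]; abel
    rw [h2, norm_neg]
    have h3 : G * (‖u‖ + ‖v‖) ≤ 1/2 := by nlinarith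
    nlinarith [norm_nonneg (u - v), mul_le_mul_of_nonneg_right h3 (norm_nonneg (u - v))]
  -- set up the contraction on the closed ball
  haveI : CompleteSpace (Metric.closedBall (0 : X) r) :=
    Metric.isClosed_closedBall.completeSpace_coe
  haveI : Nonempty (Metric.closedBall (0 : X) r) :=
    ⟨⟨0, by rw [mem_closedBall_zero_iff, norm_zero]; exact hr0⟩⟩
  set S : Metric.closedBall (0 : X) r → Metric.closedBall (0 : X) r :=
    fun p => ⟨T p.1, hmaps p.1 p.2⟩ with hS
  have hlipS : LipschitzWith (1/2 : NNReal) S := by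
    apply LipschitzWith.of_dist_le_mul
    intro p q
    have hp : ‖(p : X)‖ ≤ r := mem_closedBall_zero_iff.mp p.2
    have hq : ‖(q : X)‖ ≤ r := mem_closedBall_zero_iff.mp q.2
    have h := hcontr p.1 q.1 hp hq
    have hd1 : dist (S p) (S q) = ‖T p.1 - T q.1‖ := by
      rw [Subtype.dist_eq, dist_eq_norm]
    have hd2 : dist p q = ‖(p : X) - q‖ := by
      rw [Subtype.dist_eq, dist_eq_norm]
    rw [hd1, hd2]
    calc ‖T p.1 - T q.1‖ ≤ (1/2) * ‖(p : X) - q‖ := h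
      _ = ((1/2 : NNReal) : ℝ) * ‖(p : X) - q‖ := by norm_num
  have hC : ContractingWith (1/2 : NNReal) S := ⟨one_half_lt_one, hlipS⟩
  have key : ∃ x : X, ‖x‖ ≤ r ∧ T x = x := by
    exact ⟨(ContractingWith.fixedPoint S hC).1,
      mem_closedBall_zero_iff.mp (ContractingWith.fixedPoint S hC).2,
      congrArg Subtype.val (ContractingWith.fixedPoint_isFixedPt hC)⟩
  obtain ⟨x, hxmem, hTx⟩ := key
  have hxeq : x = -(Q y₀) - Q (N x) := hTx.symm
  have hQsplit : Q (-y₀ - N x) = -(Q y₀) - Q (N x) := by simp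
  have hxQ : x = Q (-y₀ - N x) := hxeq.trans hQsplit.symm
  have hAx : A x = -y₀ - N x := by
    conv_lhs => rw [hxQ]
    exact hAQ _
  have heq : y₀ + A x + N x = 0 := by rw [hAx]; abel
  refine ⟨x, hxmem, heq, ⟨-y₀ - N x, hxQ⟩, ?_⟩
  rintro x' ⟨z', hz'⟩ hx'norm heq'
  -- x' is also a fixed point of T
  have hQeq : Q y₀ + Q (A x') + Q (N x') = 0 := by
    have := congrArg Q heq'
    simpa [map_add] using this
  have hQAx' : Q (A x') = x' := by
    conv_lhs => rw [hz']
    rw [hAQ, ← hz']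
  rw [hQAx'] at hQeq
  have hfix' : T x' = x' := by
    simp only [hT]
    linear_combination (norm := abel) -hQeq
  have hd := hcontr x' x hx'norm hxmem
  rw [hfix', hTx] at hd
  clear hC hlipS hS S hmaps
  have h0 : ‖x' - x‖ = 0 := le_antisymm (by linarith) (norm_nonneg _)
  exact sub_eq_zero.mp (norm_eq_zero.mp h0)
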